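/- Let J = Syn(𝒜). The intersection ⋂_{i=1}^{n} L[M_i] is nonempty if and only if rc(J) > 3, i.e. if and only if no DFA over Δ with at most three states has J as its set of reset words. -/

import Mathlib

/-- The transition function of a DFA extended to words (read left to right). -/
def deltaStar {Q A : Type} (δ : Q → A → Q) (q : Q) (w : List A) : Q :=
  w.foldl δ q

/-- `w` is a reset word for the DFA with transition function `δ`. -/
def IsReset {Q A : Type} (δ : Q → A → Q) (w : List A) : Prop :=
  ∀ q q' : Q, deltaStar δ q w = deltaStar δ q' w

/-- The set of reset words of a DFA. -/
def Syn {Q A : Type} (δ : Q → A → Q) : Set (List A) :=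
  {w | IsReset δ w}

/-- The alphabet Δ = Σ ∪ {x,y,z}: `Sum.inl a` is a letter of Σ, and
`Sum.inr 0`, `Sum.inr 1`, `Sum.inr 2` are the new letters x, y, z. -/
abbrev Alph (σ : Type) : Type := σ ⊕ Fin 3

def xL {σ : Type} : Alph σ := Sum.inr 0
def yL {σ : Type} : Alph σ := Sum.inr 1
def zL {σ : Type} : Alph σ := Sum.inr 2

/-- The state set Q of the DFA 𝒜: the disjoint union of the state sets `Qst i`
of the DFAs `M i`, together with two new states: `Sum.inr false` is the sink `s`
and `Sum.inr true` is the state `h`. -/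
abbrev StA {n : ℕ} (Qst : Fin n → Type) : Type := (Σ i, Qst i) ⊕ Bool

def sA {n : ℕ} {Qst : Fin n → Type} : StA Qst := Sum.inr false
def hA {n : ℕ} {Qst : Fin n → Type} : StA Qst := Sum.inr true

/-- The transition function φ of the DFA 𝒜. -/
def phi {n : ℕ} {σ : Type} {Qst : Fin n → Type}
    (δi : ∀ i, Qst i → σ → Qst i) (qinit : ∀ i, Qst i)
    (Fi : ∀ i, Set (Qst i)) [∀ i, DecidablePred (· ∈ Fi i)] :
    StA Qst → Alph σ → StA Qst
  | Sum.inl ⟨i, q⟩, Sum.inl a => Sum.inl ⟨i, δi i q a⟩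
  | Sum.inl ⟨i, q⟩, Sum.inr k =>
      if k = 0 then Sum.inl ⟨i, qinit i⟩          -- φ(q, x) = qᵢ
      else if k = 1 then sA                        -- φ(q, y) = s
      else if q ∈ Fi i then sA else hA             -- φ(q, z) = s on Fᵢ, h off Fᵢ
  | Sum.inr _, _ => sA                             -- φ(s,·) = φ(h,·) = s

/-- The language accepted by the DFA `M i = ⟨Qst i, σ, δi i, qinit i, Fi i⟩`. -/
def LM {n : ℕ} {σ : Type} {Qst : Fin n → Type}
    (δi : ∀ i, Qst i → σ → Qst i) (qinit : ∀ i, Qst i)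
    (Fi : ∀ i, Set (Qst i)) (i : Fin n) : Set (List σ) :=
  {w | deltaStar (δi i) (qinit i) w ∈ Fi i}

/-- The reset complexity of a language `L` over the alphabet `A`: the minimal
number of states of a DFA over `A` whose set of reset words equals `L`. -/
noncomputable def rc {A : Type} (L : Set (List A)) : ℕ :=
  sInf {m | ∃ (Q : Type) (instQ : Fintype Q), Nonempty Q ∧
    ∃ δ : Q → A → Q, @Fintype.card Q instQ = m ∧ Syn δ = L}


/-! ### Generic DFA lemmas -/

theorem deltaStar_append {Q A : Type} (δ : Q → A → Q) (q : Q) (u v : List A) :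
    deltaStar δ q (u ++ v) = deltaStar δ (deltaStar δ q u) v :=
  List.foldl_append

theorem deltaStar_cons {Q A : Type} (δ : Q → A → Q) (q : Q) (c : A) (w : List A) :
    deltaStar δ q (c :: w) = deltaStar δ (δ q c) w := rfl

/-- image of the whole state set under a word -/
noncomputable def img {Q A : Type} [Fintype Q] (δ : Q → A → Q) (w : List A) : Finset Q :=
  letI := Classical.decEq Q
  Finset.univ.image (fun q => deltaStar δ q w)

theorem mem_img {Q A : Type} [Fintype Q] (δ : Q → A → Q) (w : List A) (q : Q) :
    deltaStar δ q w ∈ img δ w := by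
  letI := Classical.decEq Q
  exact Finset.mem_image_of_mem _ (Finset.mem_univ q)

theorem img_append {Q A : Type} [Fintype Q] (δ : Q → A → Q) (u v : List A) :
    img δ (u ++ v) =
      letI := Classical.decEq Q
      (img δ u).image (fun q => deltaStar δ q v) := by
  letI := Classical.decEq Q
  unfold img
  rw [Finset.image_image]
  congr 1
  funext q
  exact deltaStar_append δ q u v

theorem isReset_iff_card {Q A : Type} [Fintype Q] [Nonempty Q] (δ : Q → A → Q) (w : List A) :
    IsReset δ w ↔ (img δ w).card ≤ 1 := by
  letI := Classical.decEq Q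
  constructor
  · intro h
    apply Finset.card_le_one.mpr
    intro a ha b hb
    simp only [img, Finset.mem_image] at ha hb
    obtain ⟨q, -, rfl⟩ := ha
    obtain ⟨q', -, rfl⟩ := hb
    exact h q q'
  · intro h q q'
    exact Finset.card_le_one.mp h _ (mem_img δ w q) _ (mem_img δ w q')

theorem two_le_card_img {Q A : Type} [Fintype Q] [Nonempty Q] (δ : Q → A → Q) (w : List A)
    (h : ¬ IsReset δ w) : 2 ≤ (img δ w).card := by
  rw [isReset_iff_card] at h
  omega
open List Finset
section M
variable {n : ℕ} {σ : Type} {Qst : Fin n → Type}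
  (δi : ∀ i, Qst i → σ → Qst i) (qinit : ∀ i, Qst i)
  (Fi : ∀ i, Set (Qst i)) [∀ i, DecidablePred (· ∈ Fi i)]

theorem phi_inl_inl (i : Fin n) (p : Qst i) (a : σ) :
    phi δi qinit Fi (Sum.inl ⟨i, p⟩) (Sum.inl a) = Sum.inl ⟨i, δi i p a⟩ := rfl

theorem phi_inl_inr (i : Fin n) (p : Qst i) (k : Fin 3) :
    phi δi qinit Fi (Sum.inl ⟨i, p⟩) (Sum.inr k) =
      if k = 0 then Sum.inl ⟨i, qinit i⟩ else if k = 1 then sA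
      else if p ∈ Fi i then sA else hA := rfl

theorem phi_inr (b : Bool) (c : Alph σ) : phi δi qinit Fi (Sum.inr b) c = sA := by
  cases c <;> rfl

theorem phi_x (i : Fin n) (p : Qst i) :
    phi δi qinit Fi (Sum.inl ⟨i, p⟩) (Sum.inr 0) = Sum.inl ⟨i, qinit i⟩ := by
  rw [phi_inl_inr, if_pos rfl]

theorem phi_y (q : StA Qst) : phi δi qinit Fi q yL = sA := by
  rcases q with ⟨i, p⟩ | b
  · rw [show (yL : Alph σ) = Sum.inr 1 from rfl, phi_inl_inr,
      if_neg (by decide : ¬(1:Fin 3)=0), if_pos rfl]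
  · exact phi_inr _ _ _ _ _

theorem phi_z_def (i : Fin n) (p : Qst i) :
    phi δi qinit Fi (Sum.inl ⟨i, p⟩) zL = if p ∈ Fi i then sA else hA := by
  rw [show (zL : Alph σ) = Sum.inr 2 from rfl, phi_inl_inr,
    if_neg (by decide : ¬(2:Fin 3)=0), if_neg (by decide : ¬(2:Fin 3)=1)]
end M
def NoYZ {σ : Type} (w : List (Alph σ)) : Prop := ∀ a ∈ w, a ≠ yL ∧ a ≠ zL

def GoodW {σ : Type} (w : List (Alph σ)) : Prop :=
  ∃ u v, w = u ++ yL :: v ∨ ∃ c, w = u ++ zL :: c :: v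

theorem noYZ_inr {σ : Type} {w : List (Alph σ)} (hw : NoYZ w) {k : Fin 3}
    (hk : Sum.inr k ∈ w) : k = 0 := by
  have h := hw _ hk
  rw [show (yL : Alph σ) = Sum.inr 1 from rfl, show (zL : Alph σ) = Sum.inr 2 from rfl] at h
  obtain ⟨h1, h2⟩ := h
  have h1' : k ≠ 1 := fun h => h1 (by rw [h])
  have h2' : k ≠ 2 := fun h => h2 (by rw [h])
  omega

section M
variable {n : ℕ} {σ : Type} {Qst : Fin n → Type}
  (δi : ∀ i, Qst i → σ → Qst i) (qinit : ∀ i, Qst i)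
  (Fi : ∀ i, Set (Qst i)) [∀ i, DecidablePred (· ∈ Fi i)]

theorem fold_s (v : List (Alph σ)) : deltaStar (phi δi qinit Fi) sA v = sA := by
  induction v with
  | nil => rfl
  | cons c v ih =>
      rw [deltaStar_cons, show phi δi qinit Fi sA c = sA from phi_inr δi qinit Fi false c]
      exact ih

theorem fold_map (i : Fin n) (p : Qst i) (w : List σ) :
    deltaStar (phi δi qinit Fi) (Sum.inl ⟨i, p⟩) (w.map Sum.inl) =
      Sum.inl ⟨i, deltaStar (δi i) p w⟩ := by
  induction w generalizing p with
  | nil => rfl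
  | cons a w ih =>
      rw [List.map_cons, deltaStar_cons, phi_inl_inl, deltaStar_cons]
      exact ih _

theorem fold_stay (i : Fin n) (p : Qst i) (w : List (Alph σ)) (h : NoYZ w) :
    ∃ p', deltaStar (phi δi qinit Fi) (Sum.inl ⟨i, p⟩) w = Sum.inl ⟨i, p'⟩ := by
  induction w generalizing p with
  | nil => exact ⟨p, rfl⟩
  | cons c w ih =>
      have hrest : NoYZ w := fun a ha => h a (List.mem_cons_of_mem _ ha)
      rcases c with a | k
      · rw [deltaStar_cons, phi_inl_inl]; exact ih _ hrest
      · have hk : k = 0 := noYZ_inr h List.mem_cons_self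
        subst hk
        rw [deltaStar_cons, phi_x]
        exact ih _ hrest

theorem phi_z_cases (q : StA Qst) :
    phi δi qinit Fi q zL = sA ∨ phi δi qinit Fi q zL = hA := by
  rcases q with ⟨i, p⟩ | b
  · rw [phi_z_def]
    split
    · exact Or.inl rfl
    · exact Or.inr rfl
  · exact Or.inl (phi_inr _ _ _ _ _)

/-- any word containing `y` sends every state to the sink -/
theorem fold_y (u v : List (Alph σ)) (q : StA Qst) :
    deltaStar (phi δi qinit Fi) q (u ++ yL :: v) = sA := by
  rw [deltaStar_append, deltaStar_cons, phi_y, fold_s]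

/-- any word with `z` in non-final position sends every state to the sink -/
theorem fold_zmid (u : List (Alph σ)) (c : Alph σ) (v : List (Alph σ)) (q : StA Qst) :
    deltaStar (phi δi qinit Fi) q (u ++ zL :: c :: v) = sA := by
  rw [deltaStar_append, deltaStar_cons, deltaStar_cons]
  rcases phi_z_cases δi qinit Fi (deltaStar (phi δi qinit Fi) q u) with h | h <;> rw [h]
  · rw [show phi δi qinit Fi sA c = sA from phi_inr δi qinit Fi false c]
    exact fold_s δi qinit Fi v
  · rw [show phi δi qinit Fi hA c = sA from phi_inr δi qinit Fi true c]
    exact fold_s δi qinit Fi v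

/-- a word ending with `x ⋅ w₀ ⋅ z`, `w₀ ∈ ⋂ L(Mᵢ)`, sends every state to the sink -/
theorem fold_xw0z (w0 : List σ) (hw0 : ∀ i, deltaStar (δi i) (qinit i) w0 ∈ Fi i)
    (u : List (Alph σ)) (q : StA Qst) :
    deltaStar (phi δi qinit Fi) q (u ++ Sum.inr 0 :: (w0.map Sum.inl ++ [zL])) = sA := by
  rw [deltaStar_append, deltaStar_cons]
  rcases hq : deltaStar (phi δi qinit Fi) q u with ⟨i, p⟩ | b
  · rw [phi_x, deltaStar_append, fold_map, deltaStar_cons, phi_z_def, if_pos (hw0 i)]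
    rfl
  · rw [phi_inr, fold_s]

theorem good_reset (w : List (Alph σ)) (hg : GoodW w) :
    IsReset (phi δi qinit Fi) w := by
  obtain ⟨u, v, h | ⟨c, h⟩⟩ := hg <;> subst h <;> intro q q'
  · rw [fold_y, fold_y]
  · rw [fold_zmid, fold_zmid]

theorem xw0z_reset (w0 : List σ) (hw0 : ∀ i, deltaStar (δi i) (qinit i) w0 ∈ Fi i)
    (u : List (Alph σ)) :
    IsReset (phi δi qinit Fi) (u ++ Sum.inr 0 :: (w0.map Sum.inl ++ [zL])) := by
  intro q q'
  rw [fold_xw0z δi qinit Fi w0 hw0, fold_xw0z δi qinit Fi w0 hw0]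

theorem not_reset_noYZ (hn : 0 < n) (w : List (Alph σ)) (h : NoYZ w) :
    ¬ IsReset (phi δi qinit Fi) w := by
  intro hres
  obtain ⟨p', hp'⟩ := fold_stay δi qinit Fi ⟨0, hn⟩ (qinit ⟨0, hn⟩) w h
  have := hres (Sum.inl ⟨⟨0, hn⟩, qinit ⟨0, hn⟩⟩) sA
  rw [hp', fold_s] at this
  exact absurd this (by simp [sA])

theorem not_reset_xz (hn : 0 < n) (hqF : ∀ i, qinit i ∉ Fi i)
    (u : List (Alph σ)) (hu : NoYZ u) :
    ¬ IsReset (phi δi qinit Fi) (u ++ [Sum.inr 0, zL]) := by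
  intro hres
  obtain ⟨p', hp'⟩ := fold_stay δi qinit Fi ⟨0, hn⟩ (qinit ⟨0, hn⟩) u hu
  have := hres (Sum.inl ⟨⟨0, hn⟩, qinit ⟨0, hn⟩⟩) sA
  rw [deltaStar_append, deltaStar_append, hp', fold_s,
    show ([Sum.inr 0, zL] : List (Alph σ)) = Sum.inr 0 :: [zL] from rfl,
    deltaStar_cons, phi_x, deltaStar_cons, phi_z_def, if_neg (hqF _), fold_s] at this
  simp [deltaStar, hA, sA] at this

end M
theorem decompNoYZ {σ : Type} (u : List (Alph σ)) (hu : NoYZ u) :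
    (∃ w : List σ, u = w.map Sum.inl) ∨
    (∃ (u1 : List (Alph σ)) (w : List σ), u = u1 ++ Sum.inr 0 :: w.map Sum.inl) := by
  induction u using List.reverseRecOn with
  | nil => exact Or.inl ⟨[], rfl⟩
  | append_singleton u c ih =>
      have hu' : NoYZ u := fun a ha => hu a (List.mem_append_left _ ha)
      rcases c with a | k
      · rcases ih hu' with ⟨w, rfl⟩ | ⟨u1, w, rfl⟩
        · exact Or.inl ⟨w ++ [a], by simp⟩
        · exact Or.inr ⟨u1, w ++ [a], by simp⟩
      · have hk : k = 0 := noYZ_inr hu (by simp)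
        subst hk
        exact Or.inr ⟨u, [], by simp⟩

theorem trichW {σ : Type} (w : List (Alph σ)) :
    NoYZ w ∨ (∃ u, w = u ++ [zL] ∧ NoYZ u) ∨ GoodW w := by
  induction w using List.reverseRecOn with
  | nil => exact Or.inl (fun a ha => absurd ha List.not_mem_nil)
  | append_singleton u c ih =>
      rcases ih with h | ⟨u1, rfl, h1⟩ | ⟨a, b, h | ⟨d, h⟩⟩
      · by_cases hy : c = yL
        · exact Or.inr (Or.inr ⟨u, [], Or.inl (by rw [hy])⟩)
        · by_cases hz : c = zL
          · exact Or.inr (Or.inl ⟨u, by rw [hz], h⟩)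
          · refine Or.inl (fun a ha => ?_)
            rcases List.mem_append.mp ha with ha | ha
            · exact h a ha
            · rw [List.mem_singleton] at ha
              subst ha
              exact ⟨hy, hz⟩
      · exact Or.inr (Or.inr ⟨u1, [], Or.inr ⟨c, by simp⟩⟩)
      · subst h
        exact Or.inr (Or.inr ⟨a, b ++ [c], Or.inl (by simp)⟩)
      · subst h
        exact Or.inr (Or.inr ⟨a, b ++ [c], Or.inr ⟨d, by simp⟩⟩)

section M2
variable {n : ℕ} {σ : Type} {Qst : Fin n → Type}
  (δi : ∀ i, Qst i → σ → Qst i) (qinit : ∀ i, Qst i)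
  (Fi : ∀ i, Set (Qst i)) [∀ i, DecidablePred (· ∈ Fi i)]

theorem not_reset_uz_empty (hn : 0 < n)
    (hemp : ¬ (⋂ i, LM δi qinit Fi i).Nonempty)
    (u : List (Alph σ)) (hu : NoYZ u) :
    ¬ IsReset (phi δi qinit Fi) (u ++ [zL]) := by
  have hex : ∀ w' : List σ, ∃ i, deltaStar (δi i) (qinit i) w' ∉ Fi i := by
    intro w'
    by_contra hco
    push_neg at hco
    exact hemp ⟨w', Set.mem_iInter.mpr (fun i => hco i)⟩
  intro hres
  rcases decompNoYZ u hu with ⟨w', rfl⟩ | ⟨u1, w', rfl⟩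
  · obtain ⟨i, hi⟩ := hex w'
    have h1 : deltaStar (phi δi qinit Fi) (Sum.inl ⟨i, qinit i⟩)
        (List.map Sum.inl w' ++ [zL]) = hA := by
      rw [deltaStar_append, fold_map, show ([zL] : List (Alph σ)) = zL :: [] from rfl,
        deltaStar_cons, phi_z_def, if_neg hi]
      rfl
    have := hres (Sum.inl ⟨i, qinit i⟩) sA
    rw [h1, fold_s] at this
    simp [hA, sA] at this
  · obtain ⟨i, hi⟩ := hex w'
    have hu1 : NoYZ u1 := fun a ha => hu a (List.mem_append_left _ ha)
    obtain ⟨p', hp'⟩ := fold_stay δi qinit Fi i (qinit i) u1 hu1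
    have h1 : deltaStar (phi δi qinit Fi) (Sum.inl ⟨i, qinit i⟩)
        ((u1 ++ Sum.inr 0 :: List.map Sum.inl w') ++ [zL]) = hA := by
      have hin : deltaStar (phi δi qinit Fi) (Sum.inl ⟨i, p'⟩)
          (Sum.inr 0 :: List.map Sum.inl w') = Sum.inl ⟨i, deltaStar (δi i) (qinit i) w'⟩ := by
        rw [deltaStar_cons, phi_x, fold_map]
      rw [deltaStar_append, deltaStar_append, hp', hin,
        show ([zL] : List (Alph σ)) = zL :: [] from rfl, deltaStar_cons, phi_z_def, if_neg hi]
      rfl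
    have := hres (Sum.inl ⟨i, qinit i⟩) sA
    rw [h1, fold_s] at this
    simp [hA, sA] at this
end M2
/-! ### The 3-state DFA used when the intersection is empty -/

def delta3 (σ : Type) : Fin 3 → Alph σ → Fin 3 :=
  fun q c =>
    if q = 0 then
      (match c with
        | Sum.inl _ => 0
        | Sum.inr k => if k = 1 then 2 else if k = 2 then 1 else 0)
    else 2

theorem d3_ne0 {σ : Type} {q : Fin 3} (h : q ≠ 0) (c : Alph σ) : delta3 σ q c = 2 :=
  if_neg h

theorem d3_0_y {σ : Type} : delta3 σ 0 yL = 2 := rfl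

theorem d3_0_z {σ : Type} : delta3 σ 0 zL = 1 := rfl

theorem d3_0_other {σ : Type} {c : Alph σ} (h1 : c ≠ yL) (h2 : c ≠ zL) :
    delta3 σ 0 c = 0 := by
  rcases c with a | k
  · rfl
  · have hk : k = 0 := by
      have e1 : k ≠ 1 := fun h => h1 (by rw [show (yL : Alph σ) = Sum.inr 1 from rfl, h])
      have e2 : k ≠ 2 := fun h => h2 (by rw [show (zL : Alph σ) = Sum.inr 2 from rfl, h])
      omega
    subst hk
    rfl

theorem d3_y {σ : Type} (q : Fin 3) : delta3 σ q yL = 2 := by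
  by_cases h0 : q = 0
  · subst h0; exact d3_0_y
  · exact d3_ne0 h0 _

theorem d3_z_ne0 {σ : Type} (q : Fin 3) : delta3 σ q zL ≠ 0 := by
  by_cases h0 : q = 0
  · subst h0; rw [d3_0_z]; decide
  · rw [d3_ne0 h0]; decide

theorem d3_fold2 {σ : Type} (w : List (Alph σ)) : deltaStar (delta3 σ) 2 w = 2 := by
  induction w with
  | nil => rfl
  | cons c v ih => rw [deltaStar_cons, d3_ne0 (by decide)]; exact ih

theorem d3_foldNoYZ {σ : Type} (w : List (Alph σ)) (h : NoYZ w) :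
    deltaStar (delta3 σ) 0 w = 0 := by
  induction w with
  | nil => rfl
  | cons c v ih =>
      obtain ⟨h1, h2⟩ := h c List.mem_cons_self
      rw [deltaStar_cons, d3_0_other h1 h2]
      exact ih (fun a ha => h a (List.mem_cons_of_mem _ ha))

theorem d3_good_fold {σ : Type} (w : List (Alph σ)) (hg : GoodW w) (q : Fin 3) :
    deltaStar (delta3 σ) q w = 2 := by
  obtain ⟨u, v, h | ⟨c, h⟩⟩ := hg <;> subst h
  · rw [deltaStar_append, deltaStar_cons, d3_y]
    exact d3_fold2 v
  · rw [deltaStar_append, deltaStar_cons, deltaStar_cons, d3_ne0 (d3_z_ne0 _)]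
    exact d3_fold2 v

section M3
variable {n : ℕ} {σ : Type} {Qst : Fin n → Type}
  (δi : ∀ i, Qst i → σ → Qst i) (qinit : ∀ i, Qst i)
  (Fi : ∀ i, Set (Qst i)) [∀ i, DecidablePred (· ∈ Fi i)]

theorem easy_syn (hn : 0 < n) (hemp : ¬ (⋂ i, LM δi qinit Fi i).Nonempty) :
    Syn (delta3 σ) = Syn (phi δi qinit Fi) := by
  ext w
  show IsReset (delta3 σ) w ↔ IsReset (phi δi qinit Fi) w
  constructor
  · intro h
    have hGood : GoodW w := by
      cases w with
      | nil =>
          have h01 := h 0 1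
          simp [deltaStar] at h01
      | cons c v =>
          have h1 : deltaStar (delta3 σ) 1 (c :: v) = 2 := by
            rw [deltaStar_cons, d3_ne0 (by decide)]
            exact d3_fold2 v
          have h0 : deltaStar (delta3 σ) 0 (c :: v) = 2 := (h 0 1).trans h1
          rcases trichW (c :: v) with hp | ⟨u, hw, hp⟩ | hg
          · rw [d3_foldNoYZ _ hp] at h0
            exact absurd h0 (by decide)
          · rw [hw, deltaStar_append, d3_foldNoYZ _ hp,
              show ([zL] : List (Alph σ)) = zL :: [] from rfl, deltaStar_cons,
              d3_0_z] at h0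
            simp [deltaStar] at h0
          · exact hg
    exact good_reset δi qinit Fi w hGood
  · intro h
    rcases trichW w with hp | ⟨u, rfl, hp⟩ | hg
    · exact absurd h (not_reset_noYZ δi qinit Fi hn w hp)
    · exact absurd h (not_reset_uz_empty δi qinit Fi hn hemp u hp)
    · intro q q'
      rw [d3_good_fold w hg, d3_good_fold w hg]
end M3
/-! ### The combinatorial endgame for ≤ 3 states -/

theorem endgame {Q : Type} [Fintype Q] [DecidableEq Q] (hQ : Fintype.card Q ≤ 3)
    (A D A' : Finset Q) (f ζ : Q → Q)
    (hDA : D.card ≤ A.card)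
    (hA'im : A' = A.image ζ)
    (hDf : D.image f = A)
    (h2A : 2 ≤ A.card) (h2A' : 2 ≤ A'.card)
    (hDz : (D.image ζ).card ≤ 1)
    (hA'f : (A'.image f).card ≤ 1)
    (hA'z : (A'.image ζ).card ≤ 1) : False := by
  have hcu : ∀ S : Finset Q, S.card ≤ 3 := fun S =>
    le_trans (Finset.card_le_univ S) hQ
  have hADcard : A.card ≤ D.card := by
    calc A.card = (D.image f).card := by rw [hDf]
    _ ≤ D.card := Finset.card_image_le
  have hA'A : A'.card ≤ A.card := by rw [hA'im]; exact Finset.card_image_le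
  rcases (by have := hcu A; omega : A.card = 2 ∨ A.card = 3) with h2 | h3
  · -- |A| = 2
    have hA'2 : A'.card = 2 := by omega
    have hD2 : D.card = 2 := by omega
    have hne : A' ≠ D := by
      intro h
      rw [← h] at hDf
      have : A.card ≤ 1 := by rw [← hDf]; exact hA'f
      omega
    have hinterle : (A' ∩ D).card ≤ 2 :=
      le_trans (Finset.card_le_card Finset.inter_subset_left) (by omega)
    have hunile : (A' ∪ D).card ≤ 3 := hcu _
    have hsum := Finset.card_union_add_card_inter A' D
    have hne2 : (A' ∩ D).card ≠ 2 := by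
      intro h2'
      have he : A' ∩ D = A' :=
        Finset.eq_of_subset_of_card_le Finset.inter_subset_left (by omega)
      have hsub' : A' ⊆ D := by rw [← he]; exact Finset.inter_subset_right
      exact hne (Finset.eq_of_subset_of_card_le hsub' (by omega))
    have hinter1 : (A' ∩ D).card = 1 := by omega
    obtain ⟨c, hc⟩ := Finset.card_eq_one.mp hinter1
    have hcmem : c ∈ A' ∩ D := by rw [hc]; exact Finset.mem_singleton_self c
    have hcA' : c ∈ A' := (Finset.mem_inter.mp hcmem).1
    have hcD : c ∈ D := (Finset.mem_inter.mp hcmem).2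
    obtain ⟨a, haA', hac⟩ := Finset.exists_mem_ne (by omega : 1 < A'.card) c
    obtain ⟨d, hdD, hdc⟩ := Finset.exists_mem_ne (by omega : 1 < D.card) c
    have had : a ≠ d := by
      intro h
      subst h
      have : a ∈ A' ∩ D := Finset.mem_inter.mpr ⟨haA', hdD⟩
      rw [hc, Finset.mem_singleton] at this
      exact hac this
    have hzac : ζ a = ζ c :=
      Finset.card_le_one.mp hA'z _ (Finset.mem_image_of_mem ζ haA') _
        (Finset.mem_image_of_mem ζ hcA')
    have hzcd : ζ c = ζ d :=
      Finset.card_le_one.mp hDz _ (Finset.mem_image_of_mem ζ hcD) _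
        (Finset.mem_image_of_mem ζ hdD)
    have h3card : ({a, c, d} : Finset Q).card = 3 := by
      rw [Finset.card_insert_of_notMem (by
          simp only [Finset.mem_insert, Finset.mem_singleton]
          push_neg
          exact ⟨hac, had⟩),
        Finset.card_insert_of_notMem (by
          simp only [Finset.mem_singleton]
          exact Ne.symm hdc),
        Finset.card_singleton]
    have hQ3 : Fintype.card Q = 3 := by
      have h1 := Finset.card_le_univ ({a, c, d} : Finset Q)
      rw [h3card] at h1
      omega
    have huniv : ({a, c, d} : Finset Q) = Finset.univ :=
      Finset.eq_univ_of_card _ (by rw [h3card, hQ3])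
    have hzconst : ∀ q : Q, ζ q = ζ c := by
      intro q
      have hq : q ∈ ({a, c, d} : Finset Q) := huniv ▸ Finset.mem_univ q
      simp only [Finset.mem_insert, Finset.mem_singleton] at hq
      rcases hq with rfl | rfl | rfl
      · exact hzac
      · rfl
      · exact hzcd.symm
    have : A'.card ≤ 1 := by
      apply Finset.card_le_one.mpr
      intro x hx y hy
      rw [hA'im, Finset.mem_image] at hx hy
      obtain ⟨p, -, rfl⟩ := hx
      obtain ⟨p', -, rfl⟩ := hy
      rw [hzconst p, hzconst p']
    omega
  · -- |A| = 3
    have hQ3 : Fintype.card Q = 3 := by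
      have h1 := Finset.card_le_univ A
      omega
    have hAu : A = Finset.univ := Finset.eq_univ_of_card _ (by rw [h3, hQ3])
    have hDu : D = Finset.univ := Finset.eq_univ_of_card _ (by omega)
    have hAD : A' = D.image ζ := by rw [hA'im, hAu, hDu]
    rw [hAD] at h2A'
    omega
/-! ### The hard direction -/

def Uword {σ : Type} (W0 : List (Alph σ)) : ℕ → List (Alph σ)
  | 0 => [Sum.inr 0]
  | k + 1 => (Sum.inr 0 :: W0) ++ Uword W0 k

theorem Uword_succ {σ : Type} (W0 : List (Alph σ)) (k : ℕ) :
    Uword W0 (k + 1) = Uword W0 k ++ (W0 ++ [Sum.inr 0]) := by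
  induction k with
  | zero => simp [Uword]
  | succ k ih =>
      show (Sum.inr 0 :: W0) ++ Uword W0 (k + 1) = ((Sum.inr 0 :: W0) ++ Uword W0 k) ++ _
      rw [ih, List.append_assoc]

theorem Uword_noYZ {σ : Type} (w0 : List σ) (k : ℕ) :
    NoYZ (Uword (w0.map Sum.inl) k) := by
  induction k with
  | zero =>
      intro a ha
      simp only [Uword, List.mem_singleton] at ha
      subst ha
      exact ⟨by simp [yL], by simp [zL]⟩
  | succ k ih =>
      intro a ha
      simp only [Uword, List.cons_append, List.mem_cons, List.mem_append] at ha
      rcases ha with rfl | ha | ha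
      · exact ⟨by simp [yL], by simp [zL]⟩
      · rw [List.mem_map] at ha
        obtain ⟨b, -, rfl⟩ := ha
        exact ⟨by simp [yL], by simp [zL]⟩
      · exact ih a ha

theorem Uword_ends {σ : Type} (W0 : List (Alph σ)) (k : ℕ) :
    ∃ u, Uword W0 k = u ++ [Sum.inr 0] := by
  induction k with
  | zero => exact ⟨[], rfl⟩
  | succ k ih =>
      obtain ⟨u, hu⟩ := ih
      exact ⟨(Sum.inr 0 :: W0) ++ u, by
        show (Sum.inr 0 :: W0) ++ Uword W0 k = _
        rw [hu, List.append_assoc]⟩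

section M4
variable {n : ℕ} {σ : Type} {Qst : Fin n → Type}
  (δi : ∀ i, Qst i → σ → Qst i) (qinit : ∀ i, Qst i)
  (Fi : ∀ i, Set (Qst i)) [∀ i, DecidablePred (· ∈ Fi i)]

theorem hard_lemma (hn : 0 < n) (hqF : ∀ i, qinit i ∉ Fi i)
    (w0 : List σ) (hw0 : ∀ i, deltaStar (δi i) (qinit i) w0 ∈ Fi i)
    (Q : Type) [instQ : Fintype Q] [hne : Nonempty Q] (δ : Q → Alph σ → Q)
    (hcard : Fintype.card Q ≤ 3) (hS : Syn δ = Syn (phi δi qinit Fi)) : False := by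
  letI := Classical.decEq Q
  set W0 : List (Alph σ) := w0.map Sum.inl with hW0
  have htrans : ∀ w, IsReset δ w ↔ IsReset (phi δi qinit Fi) w := fun w =>
    Set.ext_iff.mp hS w
  -- the images of the words x(w₀x)^k have at least two elements
  have h2 : ∀ k, 2 ≤ (img δ (Uword W0 k)).card := by
    intro k
    apply two_le_card_img
    intro hres
    exact not_reset_noYZ δi qinit Fi hn _ (Uword_noYZ w0 k) ((htrans _).mp hres)
  have hsub : ∀ k, img δ (Uword W0 (k + 1)) ⊆ img δ (Uword W0 k) := by
    intro k
    show img δ ((Sum.inr 0 :: W0) ++ Uword W0 k) ⊆ _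
    rw [img_append]
    exact le_trans (Finset.image_subset_image (Finset.subset_univ _)) (le_of_eq rfl)
  -- find a stabilization point
  obtain ⟨k, hfix⟩ : ∃ k, img δ (Uword W0 (k + 1)) = img δ (Uword W0 k) := by
    by_cases h01 : img δ (Uword W0 1) = img δ (Uword W0 0)
    · exact ⟨0, h01⟩
    · refine ⟨1, Finset.eq_of_subset_of_card_le (hsub 1) ?_⟩
      have c0 : (img δ (Uword W0 0)).card ≤ 3 := le_trans (Finset.card_le_univ _) hcard
      have c1lt : (img δ (Uword W0 1)).card < (img δ (Uword W0 0)).card :=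
        Finset.card_lt_card (ssubset_of_subset_of_ne (hsub 0) h01)
      have e1 := h2 1
      have e2 := h2 (1 + 1)
      omega
  set W := Uword W0 k with hW
  obtain ⟨u', hu'0⟩ := Uword_ends W0 k
  have hu' : W = u' ++ [Sum.inr 0] := by rw [hW]; exact hu'0
  have hWno : NoYZ W := Uword_noYZ w0 k
  have hu'no : NoYZ u' := fun a ha => hWno a (by rw [hu']; exact List.mem_append_left _ ha)
  -- the main sets
  set A : Finset Q := img δ W with hA
  set D : Finset Q := img δ (W ++ W0) with hD
  set A' : Finset Q := img δ (W ++ [zL]) with hA'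
  -- D = A.image (fold W0), A' = A.image (fold [z])
  have hDim : D = A.image (fun q => deltaStar δ q W0) := img_append δ W W0
  have hA'im : A' = A.image (fun q => deltaStar δ q [zL]) := img_append δ W [zL]
  -- D.image (fold [x]) = A
  have hfix' : img δ (W ++ (W0 ++ [Sum.inr 0])) = A := by
    rw [← Uword_succ]
    exact hfix
  have hDf : D.image (fun q => deltaStar δ q [Sum.inr 0]) = A := by
    have := img_append δ (W ++ W0) [Sum.inr 0]
    rw [List.append_assoc] at this
    rw [← this]
    exact hfix'
  have hDA : D.card ≤ A.card := by
    rw [hDim]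
    exact Finset.card_image_le
  -- A' has at least two elements
  have h2A' : 2 ≤ A'.card := by
    apply two_le_card_img
    intro hres
    have : IsReset (phi δi qinit Fi) (u' ++ [Sum.inr 0, zL]) := by
      have hw : W ++ [zL] = u' ++ [Sum.inr 0, zL] := by
        rw [hu', List.append_assoc]
        rfl
      rw [← hw]
      exact (htrans _).mp hres
    exact not_reset_xz δi qinit Fi hn hqF u' hu'no this
  -- D.image ζ is a singleton
  have hDz : ((D.image (fun q => deltaStar δ q [zL]))).card ≤ 1 := by
    have hword : IsReset (phi δi qinit Fi) ((W ++ W0) ++ [zL]) := by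
      have hw : (W ++ W0) ++ [zL] = u' ++ Sum.inr 0 :: (w0.map Sum.inl ++ [zL]) := by
        rw [hu', List.append_assoc, List.append_assoc]
        rfl
      rw [hw]
      exact xw0z_reset δi qinit Fi w0 hw0 u'
    have := (isReset_iff_card δ _).mp ((htrans _).mpr hword)
    rw [img_append] at this
    exact this
  -- A'.image f and A'.image ζ are singletons
  have hA'f : ((A'.image (fun q => deltaStar δ q [Sum.inr 0]))).card ≤ 1 := by
    have hword : IsReset (phi δi qinit Fi) ((W ++ [zL]) ++ [Sum.inr 0]) := by
      have hw : (W ++ [zL]) ++ [Sum.inr 0] = W ++ zL :: Sum.inr 0 :: [] := by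
        rw [List.append_assoc]
        rfl
      rw [hw]
      exact good_reset δi qinit Fi _ ⟨W, [], Or.inr ⟨Sum.inr 0, rfl⟩⟩
    have := (isReset_iff_card δ _).mp ((htrans _).mpr hword)
    rw [img_append] at this
    exact this
  have hA'z : ((A'.image (fun q => deltaStar δ q [zL]))).card ≤ 1 := by
    have hword : IsReset (phi δi qinit Fi) ((W ++ [zL]) ++ [zL]) := by
      have hw : (W ++ [zL]) ++ [zL] = W ++ zL :: zL :: [] := by
        rw [List.append_assoc]
        rfl
      rw [hw]
      exact good_reset δi qinit Fi _ ⟨W, [], Or.inr ⟨zL, rfl⟩⟩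
    have := (isReset_iff_card δ _).mp ((htrans _).mpr hword)
    rw [img_append] at this
    exact this
  exact endgame hcard A D A' (fun q => deltaStar δ q [Sum.inr 0])
    (fun q => deltaStar δ q [zL]) hDA hA'im hDf (h2 k) h2A' hDz hA'f hA'z
end M4

/-- ⋂ᵢ L[Mᵢ] ≠ ∅ iff rc(Syn(𝒜)) > 3, i.e. iff no DFA over Δ with at most three
states has Syn(𝒜) as its set of reset words. -/
theorem inter_nonempty_iff_rc_gt_three
    (n : ℕ) (hn : 0 < n) (σ : Type) [Fintype σ]
    (Qst : Fin n → Type) [∀ i, Fintype (Qst i)]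
    (δi : ∀ i, Qst i → σ → Qst i) (qinit : ∀ i, Qst i)
    (Fi : ∀ i, Set (Qst i)) [∀ i, DecidablePred (· ∈ Fi i)]
    (hno : ∀ i (q : Qst i) (a : σ), δi i q a ≠ qinit i)
    (hqF : ∀ i, qinit i ∉ Fi i) :
    ((⋂ i, LM δi qinit Fi i).Nonempty ↔ 3 < rc (Syn (phi δi qinit Fi))) ∧
    ((⋂ i, LM δi qinit Fi i).Nonempty ↔
      ∀ (Q : Type) (instQ : Fintype Q), Nonempty Q → ∀ δ : Q → Alph σ → Q,
        @Fintype.card Q instQ ≤ 3 → Syn δ ≠ Syn (phi δi qinit Fi)) := by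
  have second : (⋂ i, LM δi qinit Fi i).Nonempty ↔
      ∀ (Q : Type) (instQ : Fintype Q), Nonempty Q → ∀ δ : Q → Alph σ → Q,
        @Fintype.card Q instQ ≤ 3 → Syn δ ≠ Syn (phi δi qinit Fi) := by
    constructor
    · rintro ⟨w0, hw0⟩ Q instQ hne δ hc hS
      have hw0' : ∀ i, deltaStar (δi i) (qinit i) w0 ∈ Fi i := fun i =>
        Set.mem_iInter.mp hw0 i
      exact hard_lemma δi qinit Fi hn hqF w0 hw0' Q (instQ := instQ) (hne := hne) δ hc hS
    · intro h
      by_contra hemp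
      exact h (Fin 3) inferInstance ⟨0⟩ (delta3 σ) (by simp)
        (easy_syn δi qinit Fi hn hemp)
  refine ⟨second.trans ?_, second⟩
  constructor
  · intro h
    by_contra hle
    push_neg at hle
    have hSne : {m | ∃ (Q : Type) (instQ : Fintype Q), Nonempty Q ∧
        ∃ δ : Q → Alph σ → Q, @Fintype.card Q instQ = m ∧
          Syn δ = Syn (phi δi qinit Fi)}.Nonempty :=
      ⟨Fintype.card (StA Qst), StA Qst, inferInstance, ⟨Sum.inr false⟩,
        phi δi qinit Fi, rfl, rfl⟩
    have hmem := Nat.sInf_mem hSne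
    obtain ⟨Q, instQ, hne, δ, hcardEq, hSyn⟩ := hmem
    have hc3 : @Fintype.card Q instQ ≤ 3 := by
      rw [hcardEq]
      exact hle
    exact h Q instQ hne δ hc3 hSyn
  · intro h Q instQ hne δ hcard hSyn
    have hle : rc (Syn (phi δi qinit Fi)) ≤ @Fintype.card Q instQ :=
      Nat.sInf_le ⟨Q, instQ, hne, δ, rfl, hSyn⟩
    omega
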